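/- Let n ≥ 1 and let I be a left ideal of M_n(ℝ[t]), the algebra of n×n matrices over the polynomial ring ℝ[t] in one variable, equipped with the involution P* = Pᵀ (entrywise transpose; coefficient conjugation is trivial over ℝ). Define √E(I) = {Q ∈ M_n(ℝ[t]) : for every a ∈ ℝ and every v ∈ ℝⁿ, if P(a)v = 0 for all P ∈ I, then Q(a)v = 0}, where P(a) ∈ M_n(ℝ) denotes the entrywise evaluation of P at t = a. Then √E(I) = rr(I), the smallest real left ideal of M_n(ℝ[t]) containing I. -/

import Mathlib

open Matrix Polynomial

noncomputable section

/-- The `*`-algebra `M_n(ℝ[t])` of `n × n` matrices of real polynomials in one variable,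
with involution `P* = Pᵀ`. -/
abbrev MP (n : ℕ) := Matrix (Fin n) (Fin n) (Polynomial ℝ)

/-- A left ideal `I` of `M_n(ℝ[t])` is real if whenever `∑ᵢ aᵢᵀ aᵢ ∈ I + I*`,
every `aᵢ ∈ I`. -/
def IsRealMP {n : ℕ} (I : Submodule (MP n) (MP n)) : Prop :=
  ∀ (r : ℕ) (a : Fin r → MP n),
    (∃ u ∈ I, ∃ w ∈ I, (∑ i, (a i)ᵀ * a i) = u + wᵀ) → ∀ i, a i ∈ I

/-- The real radical: the smallest real left ideal of `M_n(ℝ[t])` containing `I`. -/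
def rrMP {n : ℕ} (I : Submodule (MP n) (MP n)) : Submodule (MP n) (MP n) :=
  sInf {J | IsRealMP J ∧ I ≤ J}

/-- Entrywise evaluation of a polynomial matrix at the real point `a`. -/
def evalMP {n : ℕ} (P : MP n) (a : ℝ) : Matrix (Fin n) (Fin n) ℝ :=
  P.map (fun q => q.eval a)


open scoped RealInnerProductSpace

lemma quad_prod (u v : ℝ) :
    ((X - C (u:ℂ))^2 + C (v:ℂ)^2 : ℂ[X])
      = (X - C ((u:ℂ) + (v:ℂ) * Complex.I)) * (X - C ((u:ℂ) - (v:ℂ) * Complex.I)) := by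
  have hI : (Complex.I)^2 = -1 := Complex.I_sq
  have hC : (C (v:ℂ) * C Complex.I)^2 = -(C (v:ℂ))^2 := by
    rw [mul_pow, ← C_pow, ← C_pow, hI]; simp
  rw [_root_.map_add, _root_.map_sub, _root_.map_mul]
  linear_combination hC

lemma exists_real_or_quad (d : ℝ[X]) (hd : d.natDegree ≠ 0) :
    (∃ α : ℝ, d.IsRoot α) ∨ ∃ a b : ℝ, b ≠ 0 ∧ ((X - C a) ^ 2 + C b ^ 2) ∣ d := by
  have hd0 : d ≠ 0 := fun h => hd (by simp [h])
  set f := algebraMap ℝ ℂ with hf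
  have hinj : Function.Injective f := (algebraMap ℝ ℂ).injective
  have hdeg : 0 < (d.map f).degree := by
    rw [degree_map_eq_of_injective hinj]
    exact natDegree_pos_iff_degree_pos.mp (Nat.pos_of_ne_zero hd)
  obtain ⟨z, hz⟩ := Complex.exists_root hdeg
  by_cases him : z.im = 0
  · left
    refine ⟨z.re, ?_⟩
    have hzre : z = f z.re := by apply Complex.ext <;> simp [him, hf]
    have e2 : (map f d).eval (f z.re) = f (d.eval z.re) := by
      rw [eval_map, eval₂_at_apply]
    have : f (d.eval z.re) = 0 := by rw [← e2, ← hzre]; exact hz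
    exact hinj (by simpa using this)
  · right
    refine ⟨z.re, z.im, him, ?_⟩
    rw [← map_dvd_map' f]
    have hmapq : ((X - C z.re) ^ 2 + C z.im ^ 2 : ℝ[X]).map f
        = (X - C (z.re:ℂ))^2 + C (z.im:ℂ)^2 := by
      simp [Polynomial.map_add, Polynomial.map_pow, Polynomial.map_sub, hf]
    have hcz : (z.re:ℂ) - (z.im:ℂ) * Complex.I = (starRingEnd ℂ) z := by
      apply Complex.ext <;> simp
    rw [hmapq, quad_prod, Complex.re_add_im, hcz]
    have h1 : (X - C z) ∣ d.map f := dvd_iff_isRoot.mpr hz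
    have hzbar : (d.map f).IsRoot ((starRingEnd ℂ) z) := by
      have e1 : (map f d).map (starRingEnd ℂ) = map f d := by
        rw [Polynomial.map_map]; congr 1; ext x; simp [hf, Complex.conj_ofReal]
      have e2 : ((map f d).map (starRingEnd ℂ)).eval ((starRingEnd ℂ) z)
          = (starRingEnd ℂ) ((map f d).eval z) := by rw [eval_map, eval₂_at_apply]
      rw [IsRoot, ← e1, e2, hz, _root_.map_zero]
    have h2 : (X - C ((starRingEnd ℂ) z)) ∣ d.map f := dvd_iff_isRoot.mpr hzbar
    have hcop : IsCoprime (X - C z) (X - C ((starRingEnd ℂ) z)) := by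
      apply isCoprime_X_sub_C_of_isUnit_sub
      refine (sub_ne_zero.mpr ?_).isUnit
      intro h
      exact him (by simpa [Complex.ext_iff] using Complex.conj_eq_iff_im.mp h.symm)
    exact hcop.mul_dvd h1 h2

lemma key_poly_aux : ∀ (N : ℕ) (d : ℝ[X]), d.natDegree ≤ N → d ≠ 0 →
    (∀ f g h : ℝ[X], d ∣ (f^2 + g^2) * h → d ∣ f * h) →
    ∀ c : ℝ[X], (∀ α : ℝ, d.eval α = 0 → c.eval α = 0) → d ∣ c := by
  intro N
  induction N with
  | zero =>
    intro d hdeg hd0 _ c _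
    obtain ⟨a, rfl⟩ := natDegree_eq_zero.mp (Nat.le_zero.mp hdeg)
    exact (isUnit_C.mpr (isUnit_iff_ne_zero.mpr (fun h => hd0 (by simp [h])))).dvd
  | succ N ih =>
    intro d hdeg hd0 hR c hc
    by_cases hd : d.natDegree = 0
    · obtain ⟨a, rfl⟩ := natDegree_eq_zero.mp hd
      exact (isUnit_C.mpr (isUnit_iff_ne_zero.mpr (fun h => hd0 (by simp [h])))).dvd
    rcases exists_real_or_quad d hd with ⟨α, hα⟩ | ⟨a, b, hb, hq⟩
    · obtain ⟨h, hdh⟩ := dvd_iff_isRoot.mpr hα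
      have hX0 : (X - C α : ℝ[X]) ≠ 0 := X_sub_C_ne_zero α
      have hh0 : h ≠ 0 := by rintro rfl; rw [mul_zero] at hdh; exact hd0 hdh
      -- no square factor
      have hsq : ¬ (X - C α) ∣ h := by
        rintro ⟨h₂, rfl⟩
        have hh₂0 : h₂ ≠ 0 := by
          rintro rfl; rw [mul_zero] at hh0; exact hh0 rfl
        have h1 : d ∣ ((X - C α)^2 + 0^2) * h₂ :=
          ⟨1, by rw [hdh]; ring⟩
        have h2 := hR (X - C α) 0 h₂ h1
        have h3 : (X - C α) * h₂ ≠ 0 := mul_ne_zero hX0 hh₂0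
        have h4 := natDegree_le_of_dvd (hdh ▸ h2) h3
        rw [natDegree_mul hX0 hh₂0] at h4
        rw [natDegree_mul hX0 (mul_ne_zero hX0 hh₂0), natDegree_mul hX0 hh₂0,
          natDegree_X_sub_C] at h4
        omega
      -- h inherits the realness property
      have hRh : ∀ f g k : ℝ[X], h ∣ (f^2 + g^2) * k → h ∣ f * k := by
        intro f g k ⟨m, hm⟩
        have h1 : d ∣ (f^2 + g^2) * (k * (X - C α)) := by
          refine ⟨m, ?_⟩
          rw [hdh]
          calc (f^2+g^2) * (k * (X - C α)) = ((f^2+g^2)*k) * (X - C α) := by ring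
            _ = (h * m) * (X - C α) := by rw [hm]
            _ = (X - C α) * h * m := by ring
        obtain ⟨s, hs⟩ := hR f g (k * (X - C α)) h1
        refine ⟨s, mul_left_cancel₀ hX0 ?_⟩
        rw [hdh] at hs
        calc (X - C α) * (f * k) = f * (k * (X - C α)) := by ring
          _ = (X - C α) * h * s := hs
          _ = (X - C α) * (h * s) := by ring
      -- c has root α
      obtain ⟨c', hcc⟩ := dvd_iff_isRoot.mpr (hc α hα)
      have hc' : ∀ β : ℝ, h.eval β = 0 → c'.eval β = 0 := by
        intro β hβ
        have hβα : β ≠ α := by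
          rintro rfl
          exact hsq (dvd_iff_isRoot.mpr hβ)
        have : c.eval β = 0 := hc β (by rw [hdh]; simp [hβ])
        rw [hcc] at this
        simp only [eval_mul, eval_sub, eval_X, eval_C] at this
        rcases mul_eq_zero.mp this with h' | h'
        · exact absurd (by linarith [sub_eq_zero.mp h'] : β = α) hβα
        · exact h'
      have hhdeg : h.natDegree ≤ N := by
        have := hdh ▸ hdeg
        rw [natDegree_mul hX0 hh0, natDegree_X_sub_C] at this
        omega
      have := ih h hhdeg hh0 hRh c' hc'
      rw [hdh, hcc]
      exact mul_dvd_mul_left _ this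
    · -- quadratic factor: impossible
      exfalso
      obtain ⟨h, hdh⟩ := hq
      set q : ℝ[X] := (X - C a)^2 + C b^2 with hqdef
      have hq2 : q.natDegree = 2 := by
        rw [hqdef]
        compute_degree!
      have hh0 : h ≠ 0 := by rintro rfl; rw [mul_zero] at hdh; exact hd0 hdh
      have h1 : d ∣ ((C b)^2 + (X - C a)^2) * h := by
        rw [add_comm ((C b)^2), ← hqdef, ← hdh]
      have h2 := hR (C b) (X - C a) h h1
      have hCb : (C b : ℝ[X]) ≠ 0 := by simpa using hb
      have h3 := natDegree_le_of_dvd (hdh ▸ h2) (mul_ne_zero hCb hh0)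
      have hq0 : q ≠ 0 := by
        intro h'; rw [h'] at hq2; simp at hq2
      rw [natDegree_mul hq0 hh0, hq2, natDegree_mul hCb hh0, natDegree_C] at h3
      omega

lemma dot_mem' {n : ℕ} (W : Submodule ℝ (Fin n → ℝ)) (x : Fin n → ℝ)
    (h : ∀ v, (∀ w ∈ W, w ⬝ᵥ v = 0) → x ⬝ᵥ v = 0) : x ∈ W := by
  let e : EuclideanSpace ℝ (Fin n) ≃ₗ[ℝ] (Fin n → ℝ) := WithLp.linearEquiv 2 ℝ (Fin n → ℝ)
  let W' : Submodule ℝ (EuclideanSpace ℝ (Fin n)) := W.comap e.toLinearMap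
  have hinner : ∀ a b : EuclideanSpace ℝ (Fin n), (inner ℝ a b : ℝ) = dotProduct (e a) (e b) := by
    intro a b
    rw [PiLp.inner_apply]
    simp [dotProduct, e, mul_comm]
  have hx : e.symm x ∈ W' := by
    rw [← Submodule.orthogonal_orthogonal W']
    intro v hv
    rw [Submodule.mem_orthogonal] at hv
    rw [real_inner_comm, hinner]
    simp only [LinearEquiv.apply_symm_apply, e]
    apply h
    intro w hw
    have := hv (e.symm w) (by simpa [W'] using hw)
    rw [hinner] at this
    simpa [e] using this
  simpa [W', e] using hx

variable {n : ℕ}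

def evv (α : ℝ) (x : Fin n → Polynomial ℝ) : Fin n → ℝ := fun j => (x j).eval α

def evvL (α : ℝ) : (Fin n → Polynomial ℝ) →ₗ[ℝ] (Fin n → ℝ) where
  toFun := evv α
  map_add' x y := by funext j; simp [evv]
  map_smul' c x := by funext j; simp [evv]

lemma poly_decomp (y : Fin n → Polynomial ℝ) :
    y = ∑ j, y j • (Pi.single j 1 : Fin n → Polynomial ℝ) := by
  funext k
  rw [Finset.sum_apply]
  simp [Pi.single_apply, mul_ite, Finset.sum_ite_eq]

lemma coord_eval_congr (φ : (Fin n → Polynomial ℝ) →ₗ[Polynomial ℝ] Polynomial ℝ) (α : ℝ)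
    {y z : Fin n → Polynomial ℝ} (h : ∀ j, (y j).eval α = (z j).eval α) :
    (φ y).eval α = (φ z).eval α := by
  have key : ∀ w : Fin n → Polynomial ℝ,
      (φ w).eval α = ∑ j, (w j).eval α * (φ (Pi.single j 1)).eval α := by
    intro w
    conv_lhs => rw [poly_decomp w]
    rw [map_sum, eval_finset_sum]
    refine Finset.sum_congr rfl fun j _ => ?_
    rw [_root_.map_smul, smul_eq_mul, eval_mul]
  rw [key, key]
  exact Finset.sum_congr rfl fun j _ => by rw [h j]

lemma main_mod (N : Submodule (Polynomial ℝ) (Fin n → Polynomial ℝ))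
    (hstar : ∀ (f g : Polynomial ℝ) (p : Fin n → Polynomial ℝ),
      (f^2 + g^2) • p ∈ N → f • p ∈ N ∧ g • p ∈ N)
    (x : Fin n → Polynomial ℝ)
    (hx : ∀ (α : ℝ) (v : Fin n → ℝ), (∀ p ∈ N, evv α p ⬝ᵥ v = 0) → evv α x ⬝ᵥ v = 0) :
    x ∈ N := by
  obtain ⟨r, snf⟩ := N.smithNormalForm (Pi.basisFun (Polynomial ℝ) (Fin n))
  -- diagonal entries are nonzero
  have hd0 : ∀ i, snf.a i ≠ 0 := by
    intro i hi
    have h1 := snf.snf i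
    rw [hi, zero_smul] at h1
    exact Module.Basis.ne_zero snf.bN i (by exact_mod_cast Subtype.coe_injective h1)
  -- repr of members of N at embedded indices
  have hdvd : ∀ (i : Fin r) (p : Fin n → Polynomial ℝ) (hp : p ∈ N),
      snf.bM.repr p (snf.f i) = snf.a i * snf.bN.repr ⟨p, hp⟩ i := by
    intro i p hp
    have h1 := snf.repr_apply_embedding_eq_repr_smul (m := ⟨p, hp⟩) (i := i)
    rw [_root_.map_smul] at h1
    simpa [smul_eq_mul] using h1
  -- membership of scalar multiples of basis vectors
  have hdiv : ∀ (i : Fin r) (c : Polynomial ℝ), c • snf.bM (snf.f i) ∈ N → snf.a i ∣ c := by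
    intro i c hc
    have h1 := hdvd i _ hc
    rw [_root_.map_smul] at h1
    simp only [Module.Basis.repr_self, Finsupp.smul_apply, Finsupp.single_eq_same,
      smul_eq_mul, mul_one] at h1
    exact ⟨_, h1⟩
  -- each a i satisfies the real property
  have hRd : ∀ (i : Fin r) (f' g' h' : Polynomial ℝ),
      snf.a i ∣ (f'^2 + g'^2) * h' → snf.a i ∣ f' * h' := by
    intro i f' g' h' ⟨s, hs⟩
    have hmem : ((f'^2 + g'^2) * h') • snf.bM (snf.f i) ∈ N := by
      rw [hs, mul_comm, mul_smul]
      refine N.smul_mem s ?_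
      rw [← snf.snf i]
      exact (snf.bN i).2
    have h2 := (hstar f' g' (h' • snf.bM (snf.f i)) (by rwa [smul_smul])).1
    rw [smul_smul] at h2
    exact hdiv i _ h2
  -- for each α, the evaluation of x matches that of some member of N
  have p_exists : ∀ α : ℝ, ∃ p ∈ N, ∀ j, (p j).eval α = (x j).eval α := by
    intro α
    have hmem : evv α x ∈ Submodule.map (evvL (n := n) α) (N.restrictScalars ℝ) := by
      apply dot_mem'
      intro v hv
      apply hx α v
      intro p hp
      exact hv (evv α p) ⟨p, hp, rfl⟩
    obtain ⟨p, hp, hev⟩ := hmem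
    exact ⟨p, hp, fun j => congrFun hev j⟩
  -- coordinates outside the range of f vanish
  have hout : ∀ j, j ∉ Set.range snf.f → snf.bM.repr x j = 0 := by
    intro j hj
    apply Polynomial.funext
    intro α
    obtain ⟨p, hp, hev⟩ := p_exists α
    have e1 : (snf.bM.coord j p).eval α = (snf.bM.coord j x).eval α :=
      coord_eval_congr _ α hev
    have e2 : snf.bM.repr p j = 0 := snf.repr_eq_zero_of_notMem_range (m := ⟨p, hp⟩) hj
    rw [Module.Basis.coord_apply, Module.Basis.coord_apply, e2] at e1
    simpa using e1.symm
  -- divisibility of coordinates in the range of f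
  have hin : ∀ i : Fin r, snf.a i ∣ snf.bM.repr x (snf.f i) := by
    intro i
    apply key_poly_aux (snf.a i).natDegree _ le_rfl (hd0 i) (hRd i)
    intro α hα
    obtain ⟨p, hp, hev⟩ := p_exists α
    have e1 : (snf.bM.coord (snf.f i) p).eval α = (snf.bM.coord (snf.f i) x).eval α :=
      coord_eval_congr _ α hev
    rw [Module.Basis.coord_apply, Module.Basis.coord_apply, hdvd i p hp] at e1
    rw [← e1, eval_mul, hα, zero_mul]
  -- conclude
  have hsum := snf.bM.sum_repr x
  rw [← hsum]
  have hzero : ∀ j ∈ Finset.univ, j ∉ Finset.univ.image snf.f →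
      snf.bM.repr x j • snf.bM j = (0 : Fin n → Polynomial ℝ) := by
    intro j _ hj
    have : j ∉ Set.range snf.f := by
      intro ⟨i, hi⟩
      exact hj (Finset.mem_image.mpr ⟨i, Finset.mem_univ i, hi⟩)
    rw [hout j this, zero_smul]
  rw [← Finset.sum_subset (Finset.subset_univ (Finset.univ.image snf.f)) hzero]
  rw [Finset.sum_image (fun i _ i' _ h => snf.f.injective h)]
  apply N.sum_mem
  intro i _
  obtain ⟨s, hs⟩ := hin i
  rw [hs, mul_comm, mul_smul]
  refine N.smul_mem s ?_
  rw [← snf.snf i]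
  exact (snf.bN i).2

def rowM (i0 : Fin n) (x : Fin n → Polynomial ℝ) : MP n :=
  Matrix.of fun i j => if i = i0 then x j else 0

lemma rowM_eq_std_mul (i0 i : Fin n) (P : MP n) :
    Matrix.single i0 i 1 * P = rowM i0 (fun j => P i j) := by
  ext k j
  simp only [rowM, Matrix.mul_apply, Matrix.single, Matrix.of_apply]
  rcases eq_or_ne k i0 with rfl | hk
  · simp [Finset.sum_ite_eq, ite_and]
  · simp [hk, Ne.symm hk, ite_and]

lemma sum_std_mul_rowM (P : MP n) (i0 : Fin n) :
    P = ∑ i, Matrix.single i i0 1 * rowM i0 (fun j => P i j) := by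
  refine Matrix.ext fun k j => ?_
  rw [Matrix.sum_apply]
  have : ∀ i, ((Matrix.single i i0 1 * rowM i0 (fun j => P i j) : MP n)) k j
      = if k = i then P i j else 0 := by
    intro i
    simp only [Matrix.mul_apply, Matrix.single, rowM, Matrix.of_apply, ite_and]
    rcases eq_or_ne k i with rfl | hk
    · simp
    · simp [Ne.symm hk, hk]
  simp [this]

lemma rowM_transpose_mul (x y : Fin n → Polynomial ℝ) (i0 : Fin n) :
    (rowM i0 x)ᵀ * rowM i0 y = vecMulVec x y := by
  ext k j
  simp [Matrix.mul_apply, rowM, vecMulVec, Finset.sum_ite_eq, transpose_apply]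

lemma rowM_smul (i0 : Fin n) (c : Polynomial ℝ) (x : Fin n → Polynomial ℝ) :
    rowM i0 (c • x) = Matrix.diagonal (fun _ => c) * rowM i0 x := by
  ext k j
  simp [rowM, Matrix.diagonal_mul, Pi.smul_apply, smul_eq_mul]

lemma rowM_add (i0 : Fin n) (x y : Fin n → Polynomial ℝ) :
    rowM i0 (x + y) = rowM i0 x + rowM i0 y := by
  ext k j
  simp [rowM]
  split <;> simp

lemma rowM_zero (i0 : Fin n) : rowM i0 (0 : Fin n → Polynomial ℝ) = 0 := by
  ext k j; simp [rowM]

def NofJ (i0 : Fin n) (J : Submodule (MP n) (MP n)) :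
    Submodule (Polynomial ℝ) (Fin n → Polynomial ℝ) where
  carrier := {x | rowM i0 x ∈ J}
  add_mem' := by
    intro x y hx hy
    simp only [Set.mem_setOf_eq, rowM_add]
    exact J.add_mem hx hy
  zero_mem' := by
    simp only [Set.mem_setOf_eq, rowM_zero]
    exact J.zero_mem
  smul_mem' := by
    intro c x hx
    simp only [Set.mem_setOf_eq, rowM_smul]
    exact J.smul_mem (Matrix.diagonal fun _ => c) hx

lemma mem_NofJ {i0 : Fin n} {J : Submodule (MP n) (MP n)} {x : Fin n → Polynomial ℝ} :
    x ∈ NofJ i0 J ↔ rowM i0 x ∈ J := Iff.rfl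

lemma mem_J_iff_rows {i0 : Fin n} {J : Submodule (MP n) (MP n)} {P : MP n} :
    P ∈ J ↔ ∀ i, (fun j => P i j) ∈ NofJ i0 J := by
  constructor
  · intro h i
    rw [mem_NofJ, ← rowM_eq_std_mul]
    exact J.smul_mem _ h
  · intro h
    rw [sum_std_mul_rowM P i0]
    exact J.sum_mem fun i _ => J.smul_mem _ (h i)

lemma hstar_of_real {i0 : Fin n} {J : Submodule (MP n) (MP n)} (hJ : IsRealMP J)
    (f g : Polynomial ℝ) (p : Fin n → Polynomial ℝ)
    (hq : (f^2 + g^2) • p ∈ NofJ i0 J) :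
    f • p ∈ NofJ i0 J ∧ g • p ∈ NofJ i0 J := by
  set q : Fin n → Polynomial ℝ := (f^2 + g^2) • p with hqdef
  set a : Fin 2 → MP n := ![rowM i0 (f • p), rowM i0 (g • p)] with hadef
  have hsum : (∑ i, (a i)ᵀ * a i) = vecMulVec q p := by
    rw [Fin.sum_univ_two]
    simp only [hadef, Matrix.cons_val_zero, Matrix.cons_val_one, Matrix.head_cons]
    rw [rowM_transpose_mul, rowM_transpose_mul]
    ext k j
    simp only [Matrix.add_apply, vecMulVec_apply, Pi.smul_apply, smul_eq_mul, hqdef]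
    ring
  have hw : vecMulVec p q ∈ J := by
    rw [mem_J_iff_rows (i0 := i0)]
    intro i
    have : (fun j => vecMulVec p q i j) = p i • q := by
      funext j; simp [vecMulVec_apply, Pi.smul_apply, smul_eq_mul]
    rw [this]
    exact (NofJ i0 J).smul_mem (p i) hq
  have hwT : (vecMulVec p q)ᵀ = vecMulVec q p := by
    ext k j; simp [vecMulVec_apply, mul_comm]
  have := hJ 2 a ⟨0, J.zero_mem, vecMulVec p q, hw, by rw [hsum, zero_add, hwT]⟩
  exact ⟨this 0, this 1⟩

lemma evalMP_mulVec_apply (P : MP n) (α : ℝ) (v : Fin n → ℝ) (i : Fin n) :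
    (evalMP P α *ᵥ v) i = evv α (fun j => P i j) ⬝ᵥ v := by
  simp [evalMP, mulVec, dotProduct, evv, Matrix.map_apply]

lemma hard_direction (hn : 1 ≤ n) (J : Submodule (MP n) (MP n)) (hJ : IsRealMP J) (Q : MP n)
    (hQ : ∀ (a : ℝ) (v : Fin n → ℝ),
      (∀ P ∈ J, (evalMP P a).mulVec v = 0) → (evalMP Q a).mulVec v = 0) : Q ∈ J := by
  have i0 : Fin n := ⟨0, hn⟩
  rw [mem_J_iff_rows (i0 := i0)]
  intro i
  apply main_mod _ (fun f g p hp => hstar_of_real hJ f g p hp)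
  intro α v hv
  have hall : ∀ P ∈ J, (evalMP P α).mulVec v = 0 := by
    intro P hP
    funext i'
    rw [evalMP_mulVec_apply]
    exact hv _ ((mem_J_iff_rows (i0 := i0)).mp hP i')
  have := congrFun (hQ α v hall) i
  rw [evalMP_mulVec_apply] at this
  exact this

lemma evalMP_eq_map (P : MP n) (α : ℝ) : evalMP P α = P.map (evalRingHom α) := rfl

lemma evalMP_zero (α : ℝ) : evalMP (0 : MP n) α = 0 :=
  Matrix.map_zero _ (by simp)

lemma evalMP_add (P Q : MP n) (α : ℝ) : evalMP (P + Q) α = evalMP P α + evalMP Q α :=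
  Matrix.map_add _ (by simp) _ _

lemma evalMP_mul (P Q : MP n) (α : ℝ) : evalMP (P * Q) α = evalMP P α * evalMP Q α := by
  rw [evalMP_eq_map, evalMP_eq_map, evalMP_eq_map, Matrix.map_mul]

lemma evalMP_transpose (P : MP n) (α : ℝ) : evalMP Pᵀ α = (evalMP P α)ᵀ :=
  Matrix.transpose_map

lemma evalMP_sum {m : ℕ} (P : Fin m → MP n) (α : ℝ) :
    evalMP (∑ i, P i) α = ∑ i, evalMP (P i) α := by
  ext k j
  simp [evalMP, Matrix.map_apply, Matrix.sum_apply, eval_finset_sum]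

def EradMP (I : Submodule (MP n) (MP n)) : Submodule (MP n) (MP n) where
  carrier := {Q | ∀ (a : ℝ) (v : Fin n → ℝ),
    (∀ P ∈ I, (evalMP P a).mulVec v = 0) → (evalMP Q a).mulVec v = 0}
  zero_mem' := by
    intro α v _
    rw [evalMP_zero, Matrix.zero_mulVec]
  add_mem' := by
    intro P Q hP hQ α v hv
    rw [evalMP_add, Matrix.add_mulVec, hP α v hv, hQ α v hv, add_zero]
  smul_mem' := by
    intro c Q hQ α v hv
    rw [smul_eq_mul, evalMP_mul, ← Matrix.mulVec_mulVec, hQ α v hv, Matrix.mulVec_zero]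

lemma EradMP_real (I : Submodule (MP n) (MP n)) : IsRealMP (EradMP I) := by
  rintro r a ⟨u, hu, w, hw, heq⟩ i α v hv
  have key : ∑ i, (evalMP (a i) α *ᵥ v) ⬝ᵥ (evalMP (a i) α *ᵥ v) = 0 := by
    have e1 : v ⬝ᵥ (evalMP (∑ i, (a i)ᵀ * a i) α *ᵥ v)
        = ∑ i, (evalMP (a i) α *ᵥ v) ⬝ᵥ (evalMP (a i) α *ᵥ v) := by
      rw [evalMP_sum]
      have hsmv : (∑ i, evalMP ((a i)ᵀ * a i) α) *ᵥ v = ∑ i, evalMP ((a i)ᵀ * a i) α *ᵥ v := by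
        funext k
        simp only [Matrix.mulVec, dotProduct, Matrix.sum_apply, Finset.sum_mul,
          Finset.sum_apply]
        rw [Finset.sum_comm]
      rw [hsmv]
      have hds : v ⬝ᵥ (∑ i, evalMP ((a i)ᵀ * a i) α *ᵥ v)
          = ∑ i, v ⬝ᵥ (evalMP ((a i)ᵀ * a i) α *ᵥ v) := by
        simp only [dotProduct, Finset.sum_apply, Finset.mul_sum]
        rw [Finset.sum_comm]
      rw [hds]
      refine Finset.sum_congr rfl fun i _ => ?_
      rw [evalMP_mul, evalMP_transpose, ← Matrix.mulVec_mulVec, Matrix.dotProduct_mulVec,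
        Matrix.vecMul_transpose]
    have e2 : v ⬝ᵥ (evalMP (∑ i, (a i)ᵀ * a i) α *ᵥ v) = 0 := by
      rw [heq, evalMP_add, Matrix.add_mulVec, dotProduct_add, evalMP_transpose,
        hu α v hv]
      rw [dotProduct_zero, Matrix.dotProduct_mulVec, Matrix.vecMul_transpose, hw α v hv,
        zero_dotProduct, add_zero]
    rw [← e1, e2]
  have nonneg : ∀ i : Fin r, 0 ≤ (evalMP (a i) α *ᵥ v) ⬝ᵥ (evalMP (a i) α *ᵥ v) := by
    intro i
    exact Finset.sum_nonneg fun j _ => mul_self_nonneg _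
  have each := (Finset.sum_eq_zero_iff_of_nonneg (fun i _ => nonneg i)).mp key i (Finset.mem_univ i)
  exact dotProduct_self_eq_zero.mp each


/-- Nullstellensatz for `M_n(ℝ[t])`: for every left ideal `I`, the `E`-radical
`√E(I) = {Q : Q(a)v = 0 whenever P(a)v = 0 for all P ∈ I}` equals the real radical. -/
theorem stmt19 (n : ℕ) (hn : 1 ≤ n) (I : Submodule (MP n) (MP n)) :
    ∀ Q : MP n,
      (∀ (a : ℝ) (v : Fin n → ℝ),
        (∀ P ∈ I, (evalMP P a).mulVec v = 0) → (evalMP Q a).mulVec v = 0)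
      ↔ Q ∈ rrMP I := by
  intro Q
  constructor
  · intro hQ
    rw [rrMP, Submodule.mem_sInf]
    rintro J ⟨hJreal, hIJ⟩
    exact hard_direction hn J hJreal Q fun α v hv => hQ α v fun P hP => hv P (hIJ hP)
  · intro hQ
    have hle : rrMP I ≤ EradMP I := sInf_le ⟨EradMP_real I, fun P hP α v hv => hv P hP⟩
    exact hle hQ

end
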